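/- Let X be a (q+1)-regular graph (q≥1) on which Γ acts freely and with finite quotient B=X/Γ. For every real u with 0<|u|<1/q, both Δ(u) and Δ(1/(qu)) are positive invertible operators in the commutant N₀(X,Γ), Δ(1/(qu)) = (qu²)^{−1}·Δ(u), and det_Γ(Δ(1/(qu))) = (qu²)^{−|VB|} · det_Γ(Δ(u)). -/

import Mathlib

noncomputable section

open scoped ComplexConjugate ENNReal NNReal Pointwise


-- summability/tsum over fibers
private lemma tsum_fiber_eq {V E : Type*} (o : E → V)
    (hfin : ∀ v : V, Finite {e // o e = v}) {d : ℕ}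
    (hcard : ∀ v, Nat.card {e // o e = v} = d)
    {h : V → ℝ} (h0 : ∀ v, 0 ≤ h v) (hs : Summable h) :
    Summable (fun e => h (o e)) ∧ ∑' e, h (o e) = d * ∑' v, h v := by
  have hfib : ∀ v : V, (∑' _ : {e // o e = v}, h v) = (d : ℝ) * h v := fun v => by
    haveI := hfin v
    rw [tsum_const, nsmul_eq_mul, hcard v]
  have hcomp : (fun σ : Σ v : V, {e // o e = v} => h σ.1)
      = fun σ : Σ v : V, {e // o e = v} => h (o (Equiv.sigmaFiberEquiv o σ)) := by
    funext ⟨v, ⟨e, he⟩⟩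
    simp [he]
  have hsig : Summable (fun σ : Σ v : V, {e // o e = v} => h σ.1) := by
    rw [summable_sigma_of_nonneg (fun σ => h0 σ.1)]
    refine ⟨fun v => by haveI := hfin v; exact Summable.of_finite, ?_⟩
    simp only [tsum_const]
    apply Summable.congr (hs.mul_left (d : ℝ))
    intro v
    haveI := hfin v
    rw [nsmul_eq_mul, hcard v]
  have hsum : Summable (fun e => h (o e)) := by
    rw [← Equiv.summable_iff (Equiv.sigmaFiberEquiv o)]
    exact hsig.congr (fun σ => congrFun hcomp σ)
  refine ⟨hsum, ?_⟩
  calc ∑' e, h (o e) = ∑' σ : Σ v : V, {e // o e = v}, h σ.1 := by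
        rw [← Equiv.tsum_eq (Equiv.sigmaFiberEquiv o) (fun e => h (o e)), ← hcomp]
    _ = ∑' v, ∑' _ : {e // o e = v}, h v := hsig.tsum_sigma
    _ = ∑' v, (d : ℝ) * h v := by exact tsum_congr hfib
    _ = d * ∑' v, h v := tsum_mul_left

-- complex-valued fiber splitting
private lemma tsum_fiber_eq_c {V E : Type*} (o : E → V)
    {F : E → ℂ} (hF : Summable F) :
    ∑' v, ∑' e : {e // o e = v}, F e = ∑' e, F e := by
  have hsig : Summable (fun σ : Σ v : V, {e // o e = v} => F σ.2) :=
    (Equiv.summable_iff (Equiv.sigmaFiberEquiv o)).mpr hF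
  calc ∑' v, ∑' e : {e // o e = v}, F e
      = ∑' σ : Σ v : V, {e // o e = v}, F σ.2 := (hsig.tsum_sigma).symm
    _ = ∑' e, F e := Equiv.tsum_eq (Equiv.sigmaFiberEquiv o) F

private lemma norm_sq_summable {E : Type*} (F : lp (fun _ : E => ℂ) 2) :
    Summable fun e => ‖F e‖^2 := by
  have h := lp.summable_inner (𝕜 := ℂ) F F
  have h2 := h.map Complex.reAddGroupHom Complex.continuous_re
  apply h2.congr
  intro e
  simp [RCLike.inner_apply, RCLike.conj_mul, ← Complex.ofReal_pow]

private lemma norm_sq_eq {E : Type*} (F : lp (fun _ : E => ℂ) 2) :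
    ‖F‖^2 = ∑' e, ‖F e‖^2 := by
  rw [← inner_self_eq_norm_sq (𝕜 := ℂ) F, lp.inner_eq_tsum,
    RCLike.re_tsum _ (lp.summable_inner F F)]
  apply tsum_congr
  intro e
  simp [RCLike.inner_apply, RCLike.conj_mul, ← Complex.ofReal_pow]


private lemma mem_l2 {E : Type*} (F : E → ℂ) (hF : Summable fun e => ‖F e‖^2) :
    Memℓp F 2 := by
  apply memℓp_gen
  have : (2 : ℝ≥0∞).toReal = (2 : ℕ) := by simp
  rw [this]
  simpa [Real.rpow_natCast] using hF

-- Cauchy-Schwarz for square-summable families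
private lemma cs_tsum {E : Type*} (F G : E → ℂ)
    (hF : Summable fun e => ‖F e‖^2) (hG : Summable fun e => ‖G e‖^2) :
    ‖∑' e, conj (F e) * G e‖^2 ≤ (∑' e, ‖F e‖^2) * (∑' e, ‖G e‖^2) := by
  set FF : lp (fun _ : E => ℂ) 2 := ⟨F, mem_l2 F hF⟩ with hFF
  set GG : lp (fun _ : E => ℂ) 2 := ⟨G, mem_l2 G hG⟩ with hGG
  have hi : (inner ℂ FF GG : ℂ) = ∑' e, conj (F e) * G e := by
    rw [lp.inner_eq_tsum]
    exact tsum_congr fun e => RCLike.inner_apply' _ _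
  have h1 : ‖(inner ℂ FF GG : ℂ)‖ ≤ ‖FF‖ * ‖GG‖ := norm_inner_le_norm FF GG
  have h2 : ‖FF‖^2 = ∑' e, ‖F e‖^2 := by
    rw [← inner_self_eq_norm_sq (𝕜 := ℂ) FF, lp.inner_eq_tsum,
      RCLike.re_tsum _ (lp.summable_inner FF FF)]
    apply tsum_congr
    intro e
    simp [RCLike.inner_apply, RCLike.conj_mul, ← Complex.ofReal_pow]
    rfl
  have h3 : ‖GG‖^2 = ∑' e, ‖G e‖^2 := by
    rw [← inner_self_eq_norm_sq (𝕜 := ℂ) GG, lp.inner_eq_tsum,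
      RCLike.re_tsum _ (lp.summable_inner GG GG)]
    apply tsum_congr
    intro e
    simp [RCLike.inner_apply, RCLike.conj_mul, ← Complex.ofReal_pow]
    rfl
  calc ‖∑' e, conj (F e) * G e‖^2 = ‖(inner ℂ FF GG : ℂ)‖^2 := by rw [hi]
    _ ≤ (‖FF‖ * ‖GG‖)^2 := pow_le_pow_left₀ (norm_nonneg _) h1 2
    _ = (∑' e, ‖F e‖^2) * (∑' e, ‖G e‖^2) := by rw [mul_pow, h2, h3]

section main
variable {V E : Type*}
variable (o t : E → V)
    (hfin : ∀ v : V, Finite {e // o e = v}) {d : ℕ}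
    (hcard : ∀ v, Nat.card {e // o e = v} = d)
    (hfint : ∀ v : V, Finite {e // t e = v})
    (hcardt : ∀ v, Nat.card {e // t e = v} = d)
    (A : lp (fun _ : V => ℂ) 2 →L[ℂ] lp (fun _ : V => ℂ) 2)
    (hA : ∀ (f : lp (fun _ : V => ℂ) 2) (v : V),
      A f v = ∑' e : {e : E // o e = v}, f (t (e : E)))

include hfin hcard hfint hcardt hA

private lemma summable_and_inner_eq
    (f g : lp (fun _ : V => ℂ) 2) :
    Summable (fun e => conj (f (o e)) * g (t e)) ∧
      (inner ℂ f (A g) : ℂ) = ∑' e, conj (f (o e)) * g (t e) := by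
  obtain ⟨hso, _⟩ := tsum_fiber_eq o hfin hcard (h := fun v => ‖f v‖^2)
    (fun v => sq_nonneg _) (norm_sq_summable f)
  obtain ⟨hst, _⟩ := tsum_fiber_eq t hfint hcardt (h := fun v => ‖g v‖^2)
    (fun v => sq_nonneg _) (norm_sq_summable g)
  have hsum : Summable (fun e => conj (f (o e)) * g (t e)) := by
    apply Summable.of_norm_bounded (g := fun e => (‖f (o e)‖^2 + ‖g (t e)‖^2) / 2)
      ((hso.add hst).div_const 2)
    intro e
    have h1 : ‖conj (f (o e)) * g (t e)‖ = ‖f (o e)‖ * ‖g (t e)‖ := by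
      simp
    rw [h1]
    nlinarith [sq_nonneg (‖f (o e)‖ - ‖g (t e)‖)]
  refine ⟨hsum, ?_⟩
  rw [lp.inner_eq_tsum]
  calc (∑' v, (inner ℂ (f v) ((A g) v) : ℂ))
      = ∑' v, ∑' e : {e : E // o e = v}, conj (f (o (e : E))) * g (t (e : E)) := by
        apply tsum_congr; intro v
        rw [RCLike.inner_apply, hA, ← tsum_mul_right]
        haveI := hfin v
        apply tsum_congr; intro e
        rw [e.2, mul_comm]
    _ = ∑' e, conj (f (o e)) * g (t e) := tsum_fiber_eq_c o hsum

private lemma A_selfadjoint (bar : E → E)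
    (hbar_invol : ∀ e, bar (bar e) = e)
    (ho_bar : ∀ e, o (bar e) = t e)
    (ht_bar : ∀ e, t (bar e) = o e) :
    IsSelfAdjoint A := by
  rw [ContinuousLinearMap.isSelfAdjoint_iff_isSymmetric]
  intro f g
  have h1 := (summable_and_inner_eq o t hfin hcard hfint hcardt A hA g f).2
  have h2 := (summable_and_inner_eq o t hfin hcard hfint hcardt A hA f g).2
  show (inner ℂ (A f) g : ℂ) = inner ℂ f (A g)
  rw [← inner_conj_symm, h1, h2, starRingEnd_apply, tsum_star]
  have perm := Function.Involutive.toPerm bar hbar_invol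
  calc ∑' e, star (conj (g (o e)) * f (t e))
      = ∑' e, conj (f (t e)) * g (o e) := by
        apply tsum_congr; intro e; simp [mul_comm]
    _ = ∑' e, conj (f (t (bar e))) * g (o (bar e)) := by
        rw [← Equiv.tsum_eq (Function.Involutive.toPerm bar hbar_invol)
          (fun e => conj (f (t e)) * g (o e))]
        rfl
    _ = ∑' e, conj (f (o e)) * g (t e) := by
        apply tsum_congr; intro e; rw [ho_bar, ht_bar]

private lemma A_norm_bound : ‖A‖ ≤ (d : ℝ) := by
  apply ContinuousLinearMap.opNorm_le_bound _ (by positivity)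
  intro g
  obtain ⟨hso, hso2⟩ := tsum_fiber_eq o hfin hcard (h := fun v => ‖(A g) v‖^2)
    (fun v => sq_nonneg _) (norm_sq_summable (A g))
  obtain ⟨hst, hst2⟩ := tsum_fiber_eq t hfint hcardt (h := fun v => ‖g v‖^2)
    (fun v => sq_nonneg _) (norm_sq_summable g)
  have hinner := (summable_and_inner_eq o t hfin hcard hfint hcardt A hA (A g) g).2
  have hcs := cs_tsum (fun e => (A g) (o e)) (fun e => g (t e)) hso hst
  rw [hso2, hst2, ← norm_sq_eq, ← norm_sq_eq] at hcs
  have hnormsq : ‖A g‖^2 = RCLike.re (inner ℂ (A g) (A g) : ℂ) :=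
    (inner_self_eq_norm_sq (𝕜 := ℂ) (A g)).symm
  have hre : ‖A g‖^2 ≤ ‖(inner ℂ (A g) (A g) : ℂ)‖ := by
    rw [hnormsq]; exact RCLike.re_le_norm _
  have hb : ‖(inner ℂ (A g) (A g) : ℂ)‖^2 ≤ (d * ‖A g‖^2) * (d * ‖g‖^2) := by
    rw [hinner]; exact hcs
  have hAg : (0:ℝ) ≤ ‖A g‖ := norm_nonneg _
  have hgn : (0:ℝ) ≤ ‖g‖ := norm_nonneg _
  have hd : (0:ℝ) ≤ d := by positivity
  rcases eq_or_lt_of_le hAg with h0 | h0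
  · rw [← h0]; positivity
  · have h4 : ‖A g‖^4 ≤ d^2 * ‖A g‖^2 * ‖g‖^2 := by
      nlinarith [norm_nonneg (inner ℂ (A g) (A g) : ℂ)]
    have h5 : ‖A g‖^2 ≤ (d * ‖g‖)^2 := by nlinarith [h4, mul_pos h0 h0]
    calc ‖A g‖ = Real.sqrt (‖A g‖^2) := (Real.sqrt_sq hAg).symm
      _ ≤ Real.sqrt ((d * ‖g‖)^2) := Real.sqrt_le_sqrt h5
      _ = d * ‖g‖ := Real.sqrt_sq (by positivity)

end main



private lemma re_coe_mul (r : ℝ) (z : ℂ) :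
    RCLike.re ((r : ℂ) * z) = r * RCLike.re z := Complex.re_ofReal_mul r z

private lemma sa_coe (r : ℝ) : IsSelfAdjoint ((r : ℝ) : ℂ) := Complex.conj_ofReal r

instance lpOpRealCFC {V : Type*} :
    ContinuousFunctionalCalculus ℝ (lp (fun _ : V => ℂ) 2 →L[ℂ] lp (fun _ : V => ℂ) 2)
      IsSelfAdjoint :=
  IsSelfAdjoint.instContinuousFunctionalCalculus

set_option maxHeartbeats 1000000 in
/-- Lemma 6.1 (iv): for a `(q+1)`-regular graph with a free cofinite action, and real
`u` with `0<|u|<1/q`, the operators `Δ(u)` and `Δ(1/(qu))` are positive invertible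
elements of the commutant `N₀(X,Γ)`, `Δ(1/(qu)) = (qu²)^{−1} Δ(u)`, and
`det_Γ(Δ(1/(qu))) = (qu²)^{−|VB|} det_Γ(Δ(u))`. -/
theorem delta_functional_equation
    {V E Γ : Type*} [Countable V] [Countable E] [DecidableEq V]
    [Group Γ] [Countable Γ] [MulAction Γ V] [MulAction Γ E]
    -- the graph in the sense of Serre, connected
    (o t : E → V) (bar : E → E)
    (hbar_invol : ∀ e, bar (bar e) = e)
    (hbar_ne : ∀ e, bar e ≠ e)
    (ho_bar : ∀ e, o (bar e) = t e)
    (hconn : ∀ u v : V, Relation.ReflTransGen (fun a b => ∃ e, o e = a ∧ t e = b) u v)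
    -- (q+1)-regular, q ≥ 1
    (q : ℕ) (hq : 1 ≤ q) (hfib : ∀ v, {e | o e = v}.Finite)
    (hreg : ∀ v, Nat.card {e // o e = v} = q + 1)
    -- Γ acts by automorphisms of the graph
    (ho_smul : ∀ (γ : Γ) (e : E), o (γ • e) = γ • o e)
    (ht_smul : ∀ (γ : Γ) (e : E), t (γ • e) = γ • t e)
    (hbar_smul : ∀ (γ : Γ) (e : E), bar (γ • e) = γ • bar e)
    -- without inversions
    (hnoinv : ∀ (γ : Γ) (e : E), γ • e ≠ bar e)
    -- freely
    (hfree : ∀ (γ : Γ) (v : V), γ • v = v → γ = 1)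
    (hfreeE : ∀ (γ : Γ) (e : E), γ • e = e → γ = 1)
    -- cofinitely: 𝓕₀ (vertices of B = X/Γ) is finite
    (F0 : Set V) (hF0 : ∀ v : V, ∃! w, w ∈ F0 ∧ ∃ γ : Γ, γ • v = w) (hF0fin : F0.Finite)
    -- the adjacency operator A on ℓ²(VX)
    (A : lp (fun _ : V => ℂ) 2 →L[ℂ] lp (fun _ : V => ℂ) 2)
    (hA : ∀ (f : lp (fun _ : V => ℂ) 2) (v : V),
      A f v = ∑' e : {e : E // o e = v}, f (t (e : E))) :
    ∀ u : ℝ, 0 < |u| → |u| < 1 / (q : ℝ) →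
      -- Δ(u) and Δ(1/(qu)) are positive and invertible
      (((1 + (q : ℝ) * u ^ 2 : ℝ) : ℂ) • (1 : lp (fun _ : V => ℂ) 2 →L[ℂ]
          lp (fun _ : V => ℂ) 2) - ((u : ℝ) : ℂ) • A).IsPositive ∧
      IsUnit (((1 + (q : ℝ) * u ^ 2 : ℝ) : ℂ) • (1 : lp (fun _ : V => ℂ) 2 →L[ℂ]
          lp (fun _ : V => ℂ) 2) - ((u : ℝ) : ℂ) • A) ∧
      (((1 + (q : ℝ) * (1 / ((q : ℝ) * u)) ^ 2 : ℝ) : ℂ) •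
          (1 : lp (fun _ : V => ℂ) 2 →L[ℂ] lp (fun _ : V => ℂ) 2) -
          ((1 / ((q : ℝ) * u) : ℝ) : ℂ) • A).IsPositive ∧
      IsUnit (((1 + (q : ℝ) * (1 / ((q : ℝ) * u)) ^ 2 : ℝ) : ℂ) •
          (1 : lp (fun _ : V => ℂ) 2 →L[ℂ] lp (fun _ : V => ℂ) 2) -
          ((1 / ((q : ℝ) * u) : ℝ) : ℂ) • A) ∧
      -- they belong to the commutant N₀(X,Γ): they commute with the Γ-action
      (∀ (γ : Γ) (f f' : lp (fun _ : V => ℂ) 2), (∀ x, f' x = f (γ⁻¹ • x)) →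
        ∀ x : V, ((((1 + (q : ℝ) * u ^ 2 : ℝ) : ℂ) • (1 : lp (fun _ : V => ℂ) 2 →L[ℂ]
            lp (fun _ : V => ℂ) 2) - ((u : ℝ) : ℂ) • A) f') x =
          ((((1 + (q : ℝ) * u ^ 2 : ℝ) : ℂ) • (1 : lp (fun _ : V => ℂ) 2 →L[ℂ]
            lp (fun _ : V => ℂ) 2) - ((u : ℝ) : ℂ) • A) f) (γ⁻¹ • x)) ∧
      -- Δ(1/(qu)) = (qu²)⁻¹ · Δ(u)
      (((1 + (q : ℝ) * (1 / ((q : ℝ) * u)) ^ 2 : ℝ) : ℂ) •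
          (1 : lp (fun _ : V => ℂ) 2 →L[ℂ] lp (fun _ : V => ℂ) 2) -
          ((1 / ((q : ℝ) * u) : ℝ) : ℂ) • A) =
        ((((q : ℝ) * u ^ 2 : ℝ) : ℂ))⁻¹ •
          (((1 + (q : ℝ) * u ^ 2 : ℝ) : ℂ) • (1 : lp (fun _ : V => ℂ) 2 →L[ℂ]
            lp (fun _ : V => ℂ) 2) - ((u : ℝ) : ℂ) • A) ∧
      -- det_Γ(Δ(1/(qu))) = (qu²)^{−|VB|} det_Γ(Δ(u))
      Complex.exp (∑' w : F0,
          ((cfc Real.log (((1 + (q : ℝ) * (1 / ((q : ℝ) * u)) ^ 2 : ℝ) : ℂ) •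
              (1 : lp (fun _ : V => ℂ) 2 →L[ℂ] lp (fun _ : V => ℂ) 2) -
              ((1 / ((q : ℝ) * u) : ℝ) : ℂ) • A))
            (lp.single 2 (w : V) 1)) (w : V)) =
        ((((q : ℝ) * u ^ 2) ^ (-(Nat.card F0 : ℤ)) : ℝ) : ℂ) *
          Complex.exp (∑' w : F0,
            ((cfc Real.log (((1 + (q : ℝ) * u ^ 2 : ℝ) : ℂ) •
                (1 : lp (fun _ : V => ℂ) 2 →L[ℂ] lp (fun _ : V => ℂ) 2) -
                ((u : ℝ) : ℂ) • A))
              (lp.single 2 (w : V) 1)) (w : V)) := by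
  intro u hu0 hu1
  -- basic numeric facts
  have hqR : (1:ℝ) ≤ (q:ℝ) := by exact_mod_cast hq
  have hqpos : (0:ℝ) < q := by linarith
  have hune : u ≠ 0 := fun h => by simp [h] at hu0
  have huq : |u| * q < 1 := by
    rw [lt_div_iff₀ hqpos] at hu1; linarith
  have hu_lt_one : |u| < 1 := lt_of_lt_of_le hu1 (by rw [div_le_one hqpos]; exact hqR)
  -- fibers
  have hfino : ∀ v : V, Finite {e // o e = v} := fun v =>
    Nat.finite_of_card_ne_zero (by rw [hreg v]; omega)
  have ht_bar : ∀ e, t (bar e) = o e := fun e => by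
    have h := ho_bar (bar e); rw [hbar_invol e] at h; exact h.symm
  have hbar_eqv : ∀ v : V, {e // t e = v} ≃ {e // o e = v} := fun v =>
    { toFun := fun e => ⟨bar e, by rw [ho_bar]; exact e.2⟩
      invFun := fun e => ⟨bar e, by rw [ht_bar]; exact e.2⟩
      left_inv := fun e => Subtype.ext (hbar_invol e)
      right_inv := fun e => Subtype.ext (hbar_invol e) }
  have hcardt : ∀ v, Nat.card {e // t e = v} = q + 1 := fun v => by
    rw [Nat.card_congr (hbar_eqv v)]; exact hreg v
  have hfint : ∀ v : V, Finite {e // t e = v} := fun v =>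
    Finite.of_equiv _ (hbar_eqv v).symm
  -- operator facts
  have hsaA : IsSelfAdjoint A :=
    A_selfadjoint o t hfino hreg hfint hcardt A hA bar hbar_invol ho_bar ht_bar
  have hnA : ‖A‖ ≤ (q:ℝ) + 1 := by
    have h := A_norm_bound o t hfino hreg hfint hcardt A hA
    push_cast at h
    linarith
  -- abbreviations
  set Δ : lp (fun _ : V => ℂ) 2 →L[ℂ] lp (fun _ : V => ℂ) 2 :=
    ((1 + (q : ℝ) * u ^ 2 : ℝ) : ℂ) • (1 : lp (fun _ : V => ℂ) 2 →L[ℂ]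
      lp (fun _ : V => ℂ) 2) - ((u : ℝ) : ℂ) • A with hΔdef
  set Δ' : lp (fun _ : V => ℂ) 2 →L[ℂ] lp (fun _ : V => ℂ) 2 :=
    ((1 + (q : ℝ) * (1 / ((q : ℝ) * u)) ^ 2 : ℝ) : ℂ) • (1 : lp (fun _ : V => ℂ) 2 →L[ℂ]
      lp (fun _ : V => ℂ) 2) - ((1 / ((q : ℝ) * u) : ℝ) : ℂ) • A with hΔ'def
  set c : ℝ := 1 + (q : ℝ) * u ^ 2 with hcdef
  set δ : ℝ := c - |u| * ((q:ℝ) + 1) with hδdef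
  have hδpos : 0 < δ := by
    have h1 : 0 < (1 - |u|) * (1 - |u| * q) :=
      mul_pos (by linarith) (by linarith)
    have h2 : u^2 = |u|^2 := (sq_abs u).symm
    rw [hδdef, hcdef]
    nlinarith [h1]
  -- self-adjointness of Δ
  have hsaΔ : IsSelfAdjoint Δ := by
    rw [hΔdef]
    exact (IsSelfAdjoint.smul (sa_coe c) (IsSelfAdjoint.one
        (lp (fun _ : V => ℂ) 2 →L[ℂ] lp (fun _ : V => ℂ) 2))).sub
      (IsSelfAdjoint.smul (sa_coe u) hsaA)
  -- the key inner-product bound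
  have hkey : ∀ f : lp (fun _ : V => ℂ) 2,
      δ * ‖f‖^2 ≤ RCLike.re (inner ℂ (Δ f) f : ℂ) := by
    intro f
    have happ : Δ f = ((c : ℝ) : ℂ) • f - ((u : ℝ) : ℂ) • (A f) := by
      rw [hΔdef]
      simp only [ContinuousLinearMap.sub_apply, ContinuousLinearMap.smul_apply, ContinuousLinearMap.one_apply]
    rw [happ, inner_sub_left, inner_smul_left, inner_smul_left, map_sub,
      Complex.conj_ofReal, Complex.conj_ofReal, re_coe_mul, re_coe_mul,
      inner_self_eq_norm_sq]
    have h3 : |RCLike.re (inner ℂ (A f) f : ℂ)| ≤ ((q:ℝ) + 1) * ‖f‖^2 := by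
      have h4 : |RCLike.re (inner ℂ (A f) f : ℂ)| ≤ ‖(inner ℂ (A f) f : ℂ)‖ :=
        RCLike.abs_re_le_norm _
      have h5 : ‖(inner ℂ (A f) f : ℂ)‖ ≤ ‖A f‖ * ‖f‖ := norm_inner_le_norm _ _
      have h6 : ‖A f‖ ≤ ((q:ℝ) + 1) * ‖f‖ :=
        le_trans (A.le_opNorm f) (by
          have := norm_nonneg f
          exact mul_le_mul_of_nonneg_right hnA this)
      calc |RCLike.re (inner ℂ (A f) f : ℂ)| ≤ ‖A f‖ * ‖f‖ := le_trans h4 h5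
        _ ≤ (((q:ℝ) + 1) * ‖f‖) * ‖f‖ :=
            mul_le_mul_of_nonneg_right h6 (norm_nonneg f)
        _ = ((q:ℝ) + 1) * ‖f‖^2 := by ring
    have h7 : u * RCLike.re (inner ℂ (A f) f : ℂ) ≤ |u| * (((q:ℝ) + 1) * ‖f‖^2) := by
      calc u * RCLike.re (inner ℂ (A f) f : ℂ)
          ≤ |u * RCLike.re (inner ℂ (A f) f : ℂ)| := le_abs_self _
        _ = |u| * |RCLike.re (inner ℂ (A f) f : ℂ)| := abs_mul _ _
        _ ≤ |u| * (((q:ℝ) + 1) * ‖f‖^2) :=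
            mul_le_mul_of_nonneg_left h3 (abs_nonneg u)
    rw [hδdef]
    nlinarith [h7]
  -- positivity of Δ
  have hposΔ : Δ.IsPositive := by
    refine ⟨hsaΔ.isSymmetric, fun f => ?_⟩
    rw [ContinuousLinearMap.reApplyInnerSelf_apply]
    have := hkey f
    nlinarith [hδpos, sq_nonneg ‖f‖, norm_nonneg f, this]
  -- spectrum of Δ is bounded below by δ
  have hspec : ∀ x ∈ spectrum ℝ Δ, δ ≤ x := by
    have hsa2 : IsSelfAdjoint (Δ - algebraMap ℝ _ δ) := by
      refine hsaΔ.sub ?_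
      rw [Algebra.algebraMap_eq_smul_one]
      rw [RCLike.real_smul_eq_coe_smul (K := ℂ)]
      exact IsSelfAdjoint.smul (sa_coe δ) (IsSelfAdjoint.one
        (lp (fun _ : V => ℂ) 2 →L[ℂ] lp (fun _ : V => ℂ) 2))
    have hop : (0 : lp (fun _ : V => ℂ) 2 →L[ℂ] lp (fun _ : V => ℂ) 2)
        ≤ Δ - algebraMap ℝ _ δ := by
      rw [ContinuousLinearMap.nonneg_iff_isPositive]
      refine ⟨hsa2.isSymmetric, fun f => ?_⟩
      rw [ContinuousLinearMap.reApplyInnerSelf_apply, ContinuousLinearMap.sub_apply,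
        Algebra.algebraMap_eq_smul_one, ContinuousLinearMap.smul_apply,
        ContinuousLinearMap.one_apply, inner_sub_left, map_sub]
      have h8 : RCLike.re (inner ℂ (δ • f) f : ℂ) = δ * ‖f‖^2 := by
        rw [RCLike.real_smul_eq_coe_smul (K := ℂ), inner_smul_left, RCLike.conj_ofReal,
          RCLike.re_ofReal_mul, inner_self_eq_norm_sq]
      rw [h8]
      linarith [hkey f]
    intro x hx
    have h1 := (StarOrderedRing.nonneg_iff_spectrum_nonneg (R := ℝ) _ hsa2).mp hop
    have hx2 : x - δ ∈ spectrum ℝ (Δ - algebraMap ℝ _ δ) := by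
      rw [← spectrum.sub_singleton_eq]
      exact Set.sub_mem_sub hx rfl
    linarith [h1 _ hx2]
  have hunitΔ : IsUnit Δ := by
    rw [← spectrum.zero_notMem_iff ℝ]
    intro h0
    linarith [hspec 0 h0]
  -- the scaling factor
  set r : ℝ := (q : ℝ) * u ^ 2 with hrdef
  have hrpos : 0 < r := by
    rw [hrdef]
    have : u ^ 2 > 0 := by positivity
    positivity
  have hqC : ((q:ℝ):ℂ) ≠ 0 := by
    simp only [ne_eq, Complex.ofReal_eq_zero]
    exact hqpos.ne'
  have huC : ((u:ℝ):ℂ) ≠ 0 := Complex.ofReal_ne_zero.mpr hune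
  have er1 : (1 + (q : ℝ) * (1 / ((q : ℝ) * u)) ^ 2 : ℝ) = r⁻¹ * c := by
    rw [hcdef, hrdef]
    field_simp
    ring
  have er2 : ((1 / ((q : ℝ) * u)) : ℝ) = r⁻¹ * u := by
    rw [hrdef]
    field_simp
  have e1 : ((1 + (q : ℝ) * (1 / ((q : ℝ) * u)) ^ 2 : ℝ) : ℂ) = (((r:ℝ):ℂ))⁻¹ * ((c:ℝ):ℂ) := by
    rw [er1]
    push_cast
    ring
  have e2 : (((1 / ((q : ℝ) * u) : ℝ)) : ℂ) = (((r:ℝ):ℂ))⁻¹ * ((u:ℝ):ℂ) := by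
    rw [er2]
    push_cast
    ring
  -- the operator identity Δ' = r⁻¹ • Δ
  have hiden : Δ' = (((r:ℝ):ℂ))⁻¹ • Δ := by
    rw [hΔ'def, hΔdef, e1, e2, smul_sub, smul_smul, smul_smul]
  -- positivity and invertibility of Δ'
  have hsaΔ' : IsSelfAdjoint Δ' := by
    rw [hiden]
    have hsc : IsSelfAdjoint ((((r:ℝ):ℂ))⁻¹) := by
      rw [← Complex.ofReal_inv]
      exact sa_coe _
    exact IsSelfAdjoint.smul hsc hsaΔ
  have hposΔ' : Δ'.IsPositive := by
    refine ⟨hsaΔ'.isSymmetric, fun f => ?_⟩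
    rw [hiden, ContinuousLinearMap.reApplyInnerSelf_apply, ContinuousLinearMap.smul_apply,
      inner_smul_left]
    have hstar : (starRingEnd ℂ) ((((r:ℝ):ℂ))⁻¹) = (((r:ℝ):ℂ))⁻¹ := by
      rw [map_inv₀, Complex.conj_ofReal]
    rw [hstar, ← Complex.ofReal_inv, re_coe_mul]
    have h10 : 0 ≤ RCLike.re (inner ℂ (Δ f) f : ℂ) :=
      le_trans (by positivity) (hkey f)
    exact mul_nonneg (inv_nonneg.mpr hrpos.le) h10
  have hunitΔ' : IsUnit Δ' := by
    rw [hiden, Algebra.smul_def]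
    exact (IsUnit.map (algebraMap ℂ (lp (fun _ : V => ℂ) 2 →L[ℂ] lp (fun _ : V => ℂ) 2))
      (isUnit_iff_ne_zero.mpr (inv_ne_zero (Complex.ofReal_ne_zero.mpr hrpos.ne')))).mul hunitΔ
  -- the commutant property
  have hcomm : ∀ (γ : Γ) (f f' : lp (fun _ : V => ℂ) 2), (∀ x, f' x = f (γ⁻¹ • x)) →
      ∀ x : V, (Δ f') x = (Δ f) (γ⁻¹ • x) := by
    intro γ f f' hf' x
    have hAf : (A f') x = (A f) (γ⁻¹ • x) := by
      rw [hA, hA]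
      rw [← Equiv.tsum_eq
        ((⟨fun e => ⟨γ⁻¹ • (e:E), by rw [ho_smul, e.2]⟩,
          fun e => ⟨γ • (e:E), by rw [ho_smul, e.2, smul_inv_smul]⟩,
          fun e => Subtype.ext (smul_inv_smul γ (e:E)),
          fun e => Subtype.ext (inv_smul_smul γ (e:E))⟩ :
          {e : E // o e = x} ≃ {e : E // o e = γ⁻¹ • x}))
        (fun e : {e : E // o e = γ⁻¹ • x} => f (t (e : E)))]
      apply tsum_congr
      intro e
      show f' (t (e:E)) = f (t (γ⁻¹ • (e:E)))
      rw [hf', ht_smul]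
    rw [hΔdef]
    simp only [ContinuousLinearMap.sub_apply, ContinuousLinearMap.smul_apply,
      ContinuousLinearMap.one_apply, lp.coeFn_sub, lp.coeFn_smul, Pi.sub_apply,
      Pi.smul_apply, smul_eq_mul]
    rw [hAf, hf' x]
  -- the determinant identity
  haveI : Fintype ↥F0 := hF0fin.fintype
  have hspecpos : ∀ x ∈ spectrum ℝ Δ, (0:ℝ) < x := fun x hx =>
    lt_of_lt_of_le hδpos (hspec x hx)
  have hcont : ContinuousOn Real.log (spectrum ℝ Δ) :=
    Real.continuousOn_log.mono (fun x hx => by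
      simp only [Set.mem_compl_iff, Set.mem_singleton_iff]
      exact (hspecpos x hx).ne')
  have hΔ'r : Δ' = r⁻¹ • Δ := by
    rw [hiden, ← Complex.ofReal_inv, RCLike.real_smul_eq_coe_smul (K := ℂ)]
    rfl
  have hlog : cfc Real.log Δ'
      = algebraMap ℝ (lp (fun _ : V => ℂ) 2 →L[ℂ] lp (fun _ : V => ℂ) 2) (Real.log r⁻¹)
        + cfc Real.log Δ := by
    rw [hΔ'r]
    have himg : ContinuousOn Real.log ((fun x => r⁻¹ • x) '' spectrum ℝ Δ) := by
      apply Real.continuousOn_log.mono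
      rintro y ⟨x, hx, rfl⟩
      simp only [Set.mem_compl_iff, Set.mem_singleton_iff, smul_eq_mul]
      have := hspecpos x hx
      positivity
    rw [← cfc_comp_smul r⁻¹ Real.log Δ himg hsaΔ]
    have hcongr : cfc (fun x => Real.log (r⁻¹ • x)) Δ
        = cfc (fun x => Real.log r⁻¹ + Real.log x) Δ := by
      apply cfc_congr
      intro x hx
      show Real.log (r⁻¹ • x) = Real.log r⁻¹ + Real.log x
      rw [smul_eq_mul, Real.log_mul (inv_ne_zero hrpos.ne') (hspecpos x hx).ne']
    rw [hcongr,
      cfc_add (a := Δ) (f := fun _ => Real.log r⁻¹) (g := Real.log)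
        (hf := continuousOn_const) (hg := hcont),
      cfc_const (Real.log r⁻¹) Δ hsaΔ]
  refine ⟨hposΔ, hunitΔ, hposΔ', hunitΔ', hcomm, hiden, ?_⟩
  rw [hlog]
  have hterm : ∀ w : V,
      (((algebraMap ℝ (lp (fun _ : V => ℂ) 2 →L[ℂ] lp (fun _ : V => ℂ) 2) (Real.log r⁻¹)
        + cfc Real.log Δ) (lp.single 2 w 1)) w : ℂ)
      = ((Real.log r⁻¹ : ℝ) : ℂ) + ((cfc Real.log Δ) (lp.single 2 w 1)) w := by
    intro w
    rw [ContinuousLinearMap.add_apply, Algebra.algebraMap_eq_smul_one,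
      ContinuousLinearMap.smul_apply, ContinuousLinearMap.one_apply, lp.coeFn_add,
      Pi.add_apply]
    congr 1
    rw [lp.coeFn_smul, Pi.smul_apply, lp.single_apply_self]
    simp [Complex.real_smul]
  have hsum1 : (∑' w : ↥F0,
        (((algebraMap ℝ (lp (fun _ : V => ℂ) 2 →L[ℂ] lp (fun _ : V => ℂ) 2) (Real.log r⁻¹)
          + cfc Real.log Δ) (lp.single 2 (w:V) 1)) (w:V) : ℂ))
      = (Nat.card ↥F0 : ℂ) * ((Real.log r⁻¹ : ℝ) : ℂ)
        + ∑' w : ↥F0, (((cfc Real.log Δ) (lp.single 2 (w:V) 1)) (w:V) : ℂ) := by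
    rw [tsum_congr (fun w : ↥F0 => hterm (w : V)), tsum_fintype (L := SummationFilter.unconditional _),
      Finset.sum_add_distrib, Finset.sum_const, Finset.card_univ, nsmul_eq_mul,
      Nat.card_eq_fintype_card, ← tsum_fintype (L := SummationFilter.unconditional _)]
  rw [hsum1, Complex.exp_add]
  congr 1
  rw [Complex.exp_nat_mul]
  rw [← Complex.ofReal_exp, Real.exp_log (inv_pos.mpr hrpos)]
  rw [← Complex.ofReal_pow]
  congr 1
  rw [zpow_neg, zpow_natCast, inv_pow]
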